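/- arXiv:2108.02581 — 8 statements merged into one kernel-verified Lean document; each statement's English description precedes it below -/
import Mathlib

section
/- The limit T-mapping μ* of the saturation sequence satisfies Δ: for every tuple t in D, μ*(t) ≠ ∅, and μ* satisfies every functional dependency in FD. -/
open Set

namespace IncPaper

variable {Attr Const : Type}

/-- A tuple over the universe `Attr` with constants `Const`: a partial assignment. -/
abbrev Tup (Attr Const : Type) := Attr → Option Const

/-- Well-formedness: each attribute is assigned a constant of its own domain. -/
def WF (dom : Const → Attr) (t : Tup Attr Const) : Prop :=
  ∀ a c, t a = some c → dom c = a

/-- The schema of a tuple: the attributes on which it is defined. -/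
def sch (t : Tup Attr Const) : Set Attr := {a | t a ≠ none}

/-- Sub-tuple relation `t₁ ⊑ t₂`. -/
def Sub (t₁ t₂ : Tup Attr Const) : Prop := ∀ a c, t₁ a = some c → t₂ a = some c

/-- A T-mapping assigns a set of naturals to each constant. -/
abbrev TMap (Const : Type) := Const → Set ℕ

/-- Extension of a T-mapping to tuples: intersection over occurring constants. -/
def tmap (μ : TMap Const) (t : Tup Attr Const) : Set ℕ :=
  {n | ∀ a c, t a = some c → n ∈ μ c}

/-- A functional dependency `X → A`. -/
structure FDep (Attr : Type) where
  X : Set Attr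
  A : Attr

/-- Standing assumptions on sets of functional dependencies `X → A`:
`X` nonempty and `A ∉ X`. -/
def GoodFD (FD : Set (FDep Attr)) : Prop := ∀ fd ∈ FD, fd.X.Nonempty ∧ fd.A ∉ fd.X

/-- A T-mapping satisfies the dependency `X → Y`. -/
def SatFD (dom : Const → Attr) (μ : TMap Const) (X Y : Set Attr) : Prop :=
  ∀ x y : Tup Attr Const, WF dom x → WF dom y → sch x = X → sch y = Y →
    (tmap μ x ∩ tmap μ y).Nonempty → tmap μ x ⊆ tmap μ y

/-- A T-mapping satisfies a dependency `X → A` (single-attribute form). -/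
def SatFDA (dom : Const → Attr) (μ : TMap Const) (fd : FDep Attr) : Prop :=
  ∀ x : Tup Attr Const, WF dom x → sch x = fd.X →
    ∀ a : Const, dom a = fd.A → (tmap μ x ∩ μ a).Nonempty → tmap μ x ⊆ μ a

/-- `μ ⊨ Δ` where `Δ = (D, FD)`. -/
def SatDB (dom : Const → Attr) (μ : TMap Const)
    (D : Set (Tup Attr Const)) (FD : Set (FDep Attr)) : Prop :=
  (∀ t ∈ D, (tmap μ t).Nonempty) ∧ ∀ fd ∈ FD, SatFDA dom μ fd

/-- `Δ ⊢ t`: every T-mapping satisfying `Δ` assigns `t` a nonempty set. -/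
def Derives (dom : Const → Attr) (D : Set (Tup Attr Const)) (FD : Set (FDep Attr))
    (t : Tup Attr Const) : Prop :=
  ∀ μ : TMap Const, SatDB dom μ D FD → (tmap μ t).Nonempty

/-- `Δ |∼ t`: `t` is potentially false. -/
def PotFalse (dom : Const → Attr) (D : Set (Tup Attr Const)) (FD : Set (FDep Attr))
    (t : Tup Attr Const) : Prop :=
  ∃ a a' : Const, a ≠ a' ∧ dom a = dom a' ∧
    ∀ μ : TMap Const, SatDB dom μ D FD → tmap μ t ⊆ μ a ∩ μ a'

/-- The closure `t⁺` of a tuple. -/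
def closure (dom : Const → Attr) (D : Set (Tup Attr Const)) (FD : Set (FDep Attr))
    (t : Tup Attr Const) : Set Const :=
  {a | ∀ μ : TMap Const, SatDB dom μ D FD → tmap μ t ⊆ μ a}

/-- The initial T-mapping `μ₀`: identifiers of tuples of `D` containing the constant. -/
def initMap (ident : Tup Attr Const → ℕ) (D : Set (Tup Attr Const)) : TMap Const :=
  fun c => {n | ∃ t ∈ D, ident t = n ∧ ∃ a, t a = some c}

/-- One step of the saturation sequence enforcing a violated dependency. -/
def SatStep (dom : Const → Attr) (FD : Set (FDep Attr)) (μ μ' : TMap Const) : Prop :=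
  ∃ fd ∈ FD, ∃ x : Tup Attr Const, WF dom x ∧ sch x = fd.X ∧
    ∃ a : Const, dom a = fd.A ∧ (tmap μ x ∩ μ a).Nonempty ∧ ¬ tmap μ x ⊆ μ a ∧
      μ' a = μ a ∪ tmap μ x ∧ ∀ c, c ≠ a → μ' c = μ c

/-- An interpretation: a T-mapping satisfying the partition constraint. -/
def Interp (dom : Const → Attr) (μ : TMap Const) : Prop :=
  ∀ a a' : Const, a ≠ a' → dom a = dom a' → μ a ∩ μ a' = ∅

open Classical in
/-- The tuple `xa`: extend `x` with the constant `a` (on attribute `dom a`). -/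
noncomputable def extend (dom : Const → Attr) (x : Tup Attr Const) (a : Const) :
    Tup Attr Const :=
  fun b => if b = dom a then some a else x b

/-- The computed closure `cl(t)` of the closure algorithm (Algorithm 1). -/
inductive InCl (dom : Const → Attr) (D : Set (Tup Attr Const)) (FD : Set (FDep Attr))
    (t : Tup Attr Const) : Const → Prop
  | base (a : Const) (b : Attr) : t b = some a → InCl dom D FD t a
  | step (fd : FDep Attr) (x : Tup Attr Const) (a : Const) :
      fd ∈ FD → WF dom x → sch x = fd.X → dom a = fd.A →
      (∀ c : Const, (∃ b, x b = some c) → InCl dom D FD t c) →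
      Derives dom (insert t D) FD (extend dom x a) →
      InCl dom D FD t a

/-- Two tuples agree (and are defined) on a set of attributes. -/
def agreeOn (t₁ t₂ : Tup Attr Const) (X : Set Attr) : Prop :=
  ∀ b ∈ X, t₁ b = t₂ b ∧ t₁ b ≠ none

open Classical in
/-- The tuple obtained from `t₂` by taking `t₁`'s `A`-value. -/
noncomputable def chaseJoin (fd : FDep Attr) (t₁ t₂ : Tup Attr Const) : Tup Attr Const :=
  fun b => if b = fd.A then t₁ b else t₂ b

/-- One step of the chase procedure (Algorithm 2): add a new joined tuple. -/
def ChaseStep (FD : Set (FDep Attr)) (S S' : Set (Tup Attr Const)) : Prop :=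
  ∃ fd ∈ FD, ∃ t₁ ∈ S, ∃ t₂ ∈ S,
    fd.X ⊆ sch t₁ ∧ fd.A ∈ sch t₁ ∧ fd.X ⊆ sch t₂ ∧ agreeOn t₁ t₂ fd.X ∧
    chaseJoin fd t₁ t₂ ∉ S ∧ S' = insert (chaseJoin fd t₁ t₂) S

/-- Closure of a relation scheme `Q` with respect to `FD`. -/
inductive InSchCl (FD : Set (FDep Attr)) (Q : Set Attr) : Attr → Prop
  | base (A : Attr) : A ∈ Q → InSchCl FD Q A
  | step (fd : FDep Attr) : fd ∈ FD → (∀ B ∈ fd.X, InSchCl FD Q B) → InSchCl FD Q fd.A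

/-- Relational satisfaction of a functional dependency by a set of tuples. -/
def RelSatFD (R : Set (Tup Attr Const)) (fd : FDep Attr) : Prop :=
  ∀ t ∈ R, ∀ t' ∈ R, fd.X ⊆ sch t → fd.A ∈ sch t → fd.X ⊆ sch t' → fd.A ∈ sch t' →
    agreeOn t t' fd.X → t fd.A = t' fd.A

/-- A repair of `Δ`: a maximal subset of the chased table `D*` satisfying `FD`. -/
def IsRepair (FD : Set (FDep Attr)) (Dstar R : Set (Tup Attr Const)) : Prop :=
  R ⊆ Dstar ∧ (∀ fd ∈ FD, RelSatFD R fd) ∧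
    ∀ R', R ⊆ R' → R' ⊆ Dstar → (∀ fd ∈ FD, RelSatFD R' fd) → R' = R

open Classical in
/-- Restriction of a tuple to a schema `X`. -/
noncomputable def restrict (t : Tup Attr Const) (X : Set Attr) : Tup Attr Const :=
  fun b => if b ∈ X then t b else none

/-- Projection `π_X(D)` of a set of tuples. -/
def projD (Dst : Set (Tup Attr Const)) (X : Set Attr) : Set (Tup Attr Const) :=
  {q | ∃ t ∈ Dst, X ⊆ sch t ∧ q = restrict t X}

/-- Projection `π_X(FD)` of a set of functional dependencies. -/
def projFD (FD : Set (FDep Attr)) (X : Set Attr) : Set (FDep Attr) :=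
  {fd ∈ FD | fd.X ⊆ X ∧ fd.A ∈ X}

/-- Selection `σ_Γ(D)`. -/
def sel (Γ : Tup Attr Const → Prop) (Dst : Set (Tup Attr Const)) :
    Set (Tup Attr Const) :=
  {t ∈ Dst | Γ t}

/-- `inc(X → A)`: the `X`-values with conflicting `A`-values in `D*`. -/
def IncSet (Dstar : Set (Tup Attr Const)) (fd : FDep Attr) : Set (Tup Attr Const) :=
  {x | sch x = fd.X ∧ ∃ q ∈ Dstar, ∃ q' ∈ Dstar, Sub x q ∧ Sub x q' ∧
    ∃ a a' : Const, q fd.A = some a ∧ q' fd.A = some a' ∧ a ≠ a'}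

/-- The output of the repair-generation procedure for a choice function. -/
def genRepair (FD : Set (FDep Attr)) (Dstar : Set (Tup Attr Const))
    (choice : FDep Attr → Tup Attr Const → Const) : Set (Tup Attr Const) :=
  {q | q ∈ Dstar ∧ ∀ fd ∈ FD, ∀ x ∈ IncSet Dstar fd,
    Sub x q → fd.A ∈ sch q → q fd.A = some (choice fd x)}

/-- Belnap's four truth values. -/
inductive Four where
  | t
  | b
  | n
  | f
  deriving DecidableEq

namespace Four

/-- Knowledge ordering `≼ₖ`. -/
def kle (x y : Four) : Prop := x = y ∨ x = n ∨ y = b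

/-- Truth ordering `≼ₜ`. -/
def tle (x y : Four) : Prop := x = y ∨ x = f ∨ y = t

/-- Knowledge join `⊕`. -/
def oplus (x y : Four) : Four :=
  if x = n then y else if y = n then x else if x = y then x else b

/-- Knowledge meet `⊗`. -/
def otimes (x y : Four) : Four :=
  if x = b then y else if y = b then x else if x = y then x else n

/-- Truth join `∨`. -/
def lor (x y : Four) : Four :=
  if x = f then y else if y = f then x else if x = y then x else t

/-- Truth meet `∧`. -/
def land (x y : Four) : Four :=
  if x = t then y else if y = t then x else if x = y then x else f

end Four

/-- The four truth values of tuples. -/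
inductive TV where
  | vtrue
  | vfalse
  | vinc
  | vunkn
  deriving DecidableEq

namespace TV

/-- Knowledge ordering `◁` on truth values: `unkn ◁ true ◁ inc`, `unkn ◁ false ◁ inc`. -/
def kle (x y : TV) : Prop := x = y ∨ x = vunkn ∨ y = vinc

/-- Knowledge join `⊕` on truth values. -/
def kjoin (x y : TV) : TV :=
  if x = vunkn then y else if y = vunkn then x else if x = y then x else vinc

end TV

open Classical in
/-- The truth value `v_Δ(t)` of a tuple in `Δ = (D, FD)`. -/
noncomputable def tval (dom : Const → Attr) (D : Set (Tup Attr Const))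
    (FD : Set (FDep Attr)) (t : Tup Attr Const) : TV :=
  if Derives dom D FD t then (if PotFalse dom D FD t then .vinc else .vtrue)
  else (if PotFalse dom D FD t then .vfalse else .vunkn)


/-- the limit `μ*` of the saturation sequence satisfies `Δ`:
`μ*(t) ≠ ∅` for every `t ∈ D`, and `μ*` satisfies every dependency of `FD`. -/
theorem limit_satisfies_db [Fintype Attr] (dom : Const → Attr)
    (D : Set (Tup Attr Const)) (hDfin : D.Finite) (hDwf : ∀ t ∈ D, WF dom t)
    (ident : Tup Attr Const → ℕ)
    (hid : ∀ t₁ ∈ D, ∀ t₂ ∈ D, ident t₁ = ident t₂ → t₁ = t₂)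
    (FD : Set (FDep Attr)) (hFD : GoodFD FD)
    (μs : ℕ → TMap Const) (h0 : μs 0 = initMap ident D)
    (hfair : ∀ i, SatStep dom FD (μs i) (μs (i + 1)) ∨
      (μs (i + 1) = μs i ∧ ∀ ν : TMap Const, ¬ SatStep dom FD (μs i) ν))
    (N : ℕ) (hN : ∀ i, N ≤ i → μs i = μs N) :
    SatDB dom (μs N) D FD := by
  classical
  -- monotonicity of the sequence
  have mono : ∀ i c, μs i c ⊆ μs (i + 1) c := by
    intro i c
    rcases hfair i with ⟨fd, _, x, _, _, a, _, _, _, ha, hother⟩ | ⟨heq, _⟩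
    · by_cases hc : c = a
      · subst hc; rw [ha]; exact subset_union_left
      · rw [hother c hc]
    · rw [heq]
  have mono0 : ∀ i c, μs 0 c ⊆ μs i c := by
    intro i
    induction i with
    | zero => intro c; exact subset_refl _
    | succ n ih => intro c; exact (ih c).trans (mono n c)
  constructor
  · -- nonemptiness
    intro t ht
    refine ⟨ident t, ?_⟩
    intro a c hac
    apply mono0 N c
    rw [h0]
    exact ⟨t, ht, rfl, a, hac⟩
  · -- FD satisfaction
    -- no SatStep is possible from μs N
    have hstable : μs (N + 1) = μs N := hN (N + 1) (Nat.le_succ N)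
    have hnostep : ∀ ν : TMap Const, ¬ SatStep dom FD (μs N) ν := by
      rcases hfair N with hstep | ⟨_, h⟩
      · exfalso
        obtain ⟨fd, _, x, _, _, a, _, _, hnsub, ha, _⟩ := hstep
        rw [hstable] at ha
        exact hnsub (fun n hn => ha ▸ Or.inr hn)
      · exact h
    intro fd hfd
    intro x hwf hsch a hdom hne
    by_contra hnsub
    apply hnostep (fun c => if c = a then μs N a ∪ tmap (μs N) x else μs N c)
    refine ⟨fd, hfd, x, hwf, hsch, a, hdom, hne, hnsub, ?_, ?_⟩
    · simp
    · intro c hc; simp [hc]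

end IncPaper
end

section
/- For the limit T-mapping μ* of Δ = (D, FD): if a₁ and a₂ are distinct constants in the same attribute domain dom(A) with μ*(a₁) ∩ μ*(a₂) ≠ ∅, then there exist a functional dependency X → A in FD and a tuple x over X such that μ*(x) ≠ ∅ and μ*(x) ⊆ μ*(a₁) ∩ μ*(a₂). -/
open Set

namespace IncPaper

variable {Attr Const : Type}

/-- if the limit `μ*` gives a common identifier to two distinct constants of
the same attribute domain, this is due to a functional dependency: some `X → A ∈ FD` and
`x` over `X` with `μ*(x) ≠ ∅` and `μ*(x) ⊆ μ*(a₁) ∩ μ*(a₂)`. -/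
theorem limit_overlap_from_fd [Fintype Attr] (dom : Const → Attr)
    (D : Set (Tup Attr Const)) (hDfin : D.Finite) (hDwf : ∀ t ∈ D, WF dom t)
    (ident : Tup Attr Const → ℕ)
    (hid : ∀ t₁ ∈ D, ∀ t₂ ∈ D, ident t₁ = ident t₂ → t₁ = t₂)
    (FD : Set (FDep Attr)) (hFD : GoodFD FD)
    (μs : ℕ → TMap Const) (h0 : μs 0 = initMap ident D)
    (hfair : ∀ i, SatStep dom FD (μs i) (μs (i + 1)) ∨
      (μs (i + 1) = μs i ∧ ∀ ν : TMap Const, ¬ SatStep dom FD (μs i) ν))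
    (N : ℕ) (hN : ∀ i, N ≤ i → μs i = μs N) :
    ∀ a₁ a₂ : Const, a₁ ≠ a₂ → dom a₁ = dom a₂ →
      (μs N a₁ ∩ μs N a₂).Nonempty →
      ∃ fd ∈ FD, fd.A = dom a₁ ∧ ∃ x : Tup Attr Const, WF dom x ∧ sch x = fd.X ∧
        (tmap (μs N) x).Nonempty ∧ tmap (μs N) x ⊆ μs N a₁ ∩ μs N a₂ := by
  intro a₁ a₂ hne hdom hint
  classical
  -- monotonicity of the sequence
  have mono : ∀ i c, μs i c ⊆ μs (i + 1) c := by
    intro i c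
    rcases hfair i with ⟨fd, hfd, x, hwf, hsch, a, hda, hne', hnsub, heq, hrest⟩ | ⟨heq, _⟩
    · by_cases hc : c = a
      · subst hc; rw [heq]; exact Set.subset_union_left
      · rw [hrest c hc]
    · rw [heq]
  have monoLe : ∀ i j, i ≤ j → ∀ c, μs i c ⊆ μs j c := by
    intro i j hij
    induction hij with
    | refl => intro c; exact subset_rfl
    | step h ih =>
        intro c
        exact (ih c).trans (mono _ c)
  have tmono : ∀ i j, i ≤ j → ∀ x : Tup Attr Const, tmap (μs i) x ⊆ tmap (μs j) x := by
    intro i j hij x n hn a c hac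
    exact monoLe i j hij c (hn a c hac)
  -- initial disjointness
  have hinit : ¬ (μs 0 a₁ ∩ μs 0 a₂).Nonempty := by
    rintro ⟨n, hn1, hn2⟩
    rw [h0] at hn1 hn2
    obtain ⟨t₁, ht₁, hid1, b₁, hb₁⟩ := hn1
    obtain ⟨t₂, ht₂, hid2, b₂, hb₂⟩ := hn2
    have ht : t₁ = t₂ := hid t₁ ht₁ t₂ ht₂ (hid1.trans hid2.symm)
    subst ht
    have e1 : dom a₁ = b₁ := hDwf t₁ ht₁ b₁ a₁ hb₁
    have e2 : dom a₂ = b₂ := hDwf t₁ ht₁ b₂ a₂ hb₂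
    have hbb : b₁ = b₂ := by rw [← e1, ← e2, hdom]
    subst hbb
    rw [hb₁] at hb₂
    exact hne (Option.some.inj hb₂)
  -- saturation at N
  have hsat : ∀ fd ∈ FD, ∀ x : Tup Attr Const, WF dom x → sch x = fd.X →
      ∀ a : Const, dom a = fd.A → (tmap (μs N) x ∩ μs N a).Nonempty →
      tmap (μs N) x ⊆ μs N a := by
    intro fd hfd x hwf hsch a hda hne'
    by_contra hnsub
    have hstep : SatStep dom FD (μs N)
        (fun c => if c = a then μs N a ∪ tmap (μs N) x else μs N c) :=
      ⟨fd, hfd, x, hwf, hsch, a, hda, hne', hnsub, by simp, fun c hc => by simp [hc]⟩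
    rcases hfair N with h | ⟨_, hno⟩
    · obtain ⟨fd', hfd', x', hwf', hsch', a', hda', hne'', hnsub', heq', _⟩ := h
      have hNN : μs (N + 1) = μs N := hN (N + 1) (by omega)
      rw [hNN] at heq'
      exact hnsub' (fun n hn => by rw [heq']; exact Or.inr hn)
    · exact hno _ hstep
  -- minimal index where the intersection is nonempty
  have hex : ∃ i, (μs i a₁ ∩ μs i a₂).Nonempty := ⟨N, hint⟩
  set k := Nat.find hex with hk
  have hPk : (μs k a₁ ∩ μs k a₂).Nonempty := Nat.find_spec hex
  have hkN : k ≤ N := Nat.find_min' hex hint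
  have hkpos : 0 < k := by
    rcases Nat.eq_zero_or_pos k with h | h
    · exact absurd (h ▸ hPk) hinit
    · exact h
  obtain ⟨j, hj⟩ : ∃ j, k = j + 1 := ⟨k - 1, by omega⟩
  have hPj : ¬ (μs j a₁ ∩ μs j a₂).Nonempty := Nat.find_min hex (by omega)
  have hstepj : SatStep dom FD (μs j) (μs (j + 1)) := by
    rcases hfair j with h | ⟨heq, _⟩
    · exact h
    · exfalso; apply hPj; rw [← heq, ← hj]; exact hPk
  obtain ⟨fd, hfd, x, hwf, hsch, a, hda, ⟨m, hm1, hm2⟩, hnsub, heq, hrest⟩ := hstepj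
  rw [← hj] at heq hrest
  obtain ⟨n, hn1, hn2⟩ := hPk
  have hjN : j ≤ N := by omega
  -- main argument, symmetric in which of a₁, a₂ is the stepped constant
  have key : ∀ c₁ c₂ : Const, ((c₁ = a₁ ∧ c₂ = a₂) ∨ (c₁ = a₂ ∧ c₂ = a₁)) →
      a = c₁ → c₂ ≠ c₁ →
      n ∈ μs k c₁ → n ∈ μs k c₂ → ¬ (n ∈ μs j c₁ ∧ n ∈ μs j c₂) →
      ∃ fd' ∈ FD, fd'.A = dom a₁ ∧ ∃ x' : Tup Attr Const, WF dom x' ∧ sch x' = fd'.X ∧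
        (tmap (μs N) x').Nonempty ∧ tmap (μs N) x' ⊆ μs N a₁ ∩ μs N a₂ := by
    intro c₁ c₂ hside hac hne12 hc1 hc2 hnotj
    subst hac
    have hc2j : n ∈ μs j c₂ := by rw [← hrest c₂ hne12]; exact hc2
    have hnx : n ∈ tmap (μs j) x := by
      rw [heq] at hc1
      rcases hc1 with h | h
      · exact absurd ⟨h, hc2j⟩ hnotj
      · exact h
    have hnxN : n ∈ tmap (μs N) x := tmono j N hjN x hnx
    have hsub1 : tmap (μs N) x ⊆ μs N a :=
      hsat fd hfd x hwf hsch a hda ⟨m, tmono j N hjN x hm1, monoLe j N hjN a hm2⟩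
    have hdc2 : dom c₂ = fd.A := by
      rw [← hda]
      rcases hside with ⟨h1, h2⟩ | ⟨h1, h2⟩
      · rw [h1, h2, hdom]
      · rw [h1, h2, ← hdom]
    have hsub2 : tmap (μs N) x ⊆ μs N c₂ :=
      hsat fd hfd x hwf hsch c₂ hdc2 ⟨n, hnxN, monoLe j N hjN c₂ hc2j⟩
    have hA : fd.A = dom a₁ := by
      rw [← hda]
      rcases hside with ⟨h1, _⟩ | ⟨h1, _⟩
      · rw [h1]
      · rw [h1, ← hdom]
    refine ⟨fd, hfd, hA, x, hwf, hsch, ⟨n, hnxN⟩, fun p hp => ?_⟩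
    rcases hside with ⟨h1, h2⟩ | ⟨h1, h2⟩
    · exact ⟨h1 ▸ hsub1 hp, h2 ▸ hsub2 hp⟩
    · exact ⟨h2 ▸ hsub2 hp, h1 ▸ hsub1 hp⟩
  by_cases h1 : a = a₁
  · exact key a₁ a₂ (Or.inl ⟨rfl, rfl⟩) h1 (fun h => hne h.symm) hn1 hn2
      (fun ⟨u, v⟩ => hPj ⟨n, u, v⟩)
  · by_cases h2 : a = a₂
    · exact key a₂ a₁ (Or.inr ⟨rfl, rfl⟩) h2 hne hn2 hn1
        (fun ⟨u, v⟩ => hPj ⟨n, v, u⟩)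
    · exfalso
      apply hPj
      refine ⟨n, ?_, ?_⟩
      · rw [← hrest a₁ (fun h => h1 h.symm)]; exact hn1
      · rw [← hrest a₂ (fun h => h2 h.symm)]; exact hn2

end IncPaper
end

section
/- For all constants α and β, the following are equivalent: (i) for every T-mapping μ satisfying Δ, μ(α) ∩ μ(β) ≠ ∅; (ii) μ*(α) ∩ μ*(β) ≠ ∅, where μ* is the limit of the saturation sequence for Δ. -/
open Set

namespace IncPaper

variable {Attr Const : Type}

/-- for all constants `α`, `β`: `Δ ⊢ (α ⊓ β)` (every T-mapping satisfying
`Δ` gives `μ(α) ∩ μ(β) ≠ ∅`) iff `μ*(α) ∩ μ*(β) ≠ ∅` for the limit `μ*`. -/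
theorem derivable_overlap_iff_limit_overlap [Fintype Attr] (dom : Const → Attr)
    (D : Set (Tup Attr Const)) (hDfin : D.Finite) (hDwf : ∀ t ∈ D, WF dom t)
    (ident : Tup Attr Const → ℕ)
    (hid : ∀ t₁ ∈ D, ∀ t₂ ∈ D, ident t₁ = ident t₂ → t₁ = t₂)
    (FD : Set (FDep Attr)) (hFD : GoodFD FD)
    (μs : ℕ → TMap Const) (h0 : μs 0 = initMap ident D)
    (hfair : ∀ i, SatStep dom FD (μs i) (μs (i + 1)) ∨
      (μs (i + 1) = μs i ∧ ∀ ν : TMap Const, ¬ SatStep dom FD (μs i) ν))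
    (N : ℕ) (hN : ∀ i, N ≤ i → μs i = μs N) :
    ∀ α β : Const,
      (∀ μ : TMap Const, SatDB dom μ D FD → (μ α ∩ μ β).Nonempty) ↔
        (μs N α ∩ μs N β).Nonempty := by
  classical
  intro α β
  have mono : ∀ i, ∀ c, μs i c ⊆ μs (i+1) c := by
    intro i c
    rcases hfair i with ⟨fd, hfd, x, hwx, hsx, a, hda, hne, hns, heq, hrest⟩ | ⟨heq, _⟩
    · by_cases hc : c = a
      · subst hc; rw [heq]; exact Set.subset_union_left
      · rw [hrest c hc]
    · rw [heq]
  have mono0 : ∀ c, μs 0 c ⊆ μs N c := by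
    intro c
    have : ∀ i, μs 0 c ⊆ μs i c := by
      intro i; induction i with
      | zero => exact subset_rfl
      | succ k ih => exact ih.trans (mono k c)
    exact this N
  have hstable : ∀ ν, ¬ SatStep dom FD (μs N) ν := by
    rcases hfair N with ⟨fd, hfd, x, hwx, hsx, a, hda, hne, hns, heq, hrest⟩ | ⟨_, h⟩
    · exfalso
      have h1 : μs (N+1) = μs N := hN (N+1) (Nat.le_succ N)
      apply hns
      intro n hn
      have : n ∈ μs (N+1) a := by rw [heq]; exact Or.inr hn
      rwa [h1] at this
    · exact h
  have hsatN : SatDB dom (μs N) D FD := by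
    constructor
    · intro t ht
      refine ⟨ident t, ?_⟩
      intro a c hac
      apply mono0
      rw [h0]
      exact ⟨t, ht, rfl, a, hac⟩
    · intro fd hfd x hwx hsx a hda hne
      by_contra hns
      exact hstable (fun c => if c = a then μs N a ∪ tmap (μs N) x else μs N c)
        ⟨fd, hfd, x, hwx, hsx, a, hda, hne, hns, by simp, fun c hc => by simp [hc]⟩
  constructor
  · intro h; exact h (μs N) hsatN
  · rintro ⟨n, hnα, hnβ⟩ μ hμ
    choose mt hmt using hμ.1
    set h : ℕ → ℕ := fun m =>
      if hm : ∃ t, ∃ _ : t ∈ D, ident t = m then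
        mt hm.choose hm.choose_spec.choose else 0 with hdef
    have key : ∀ i c m, m ∈ μs i c → h m ∈ μ c := by
      intro i
      induction i with
      | zero =>
        intro c m hm
        rw [h0] at hm
        obtain ⟨t, ht, hit, a, hta⟩ := hm
        have hex : ∃ t', ∃ _ : t' ∈ D, ident t' = m := ⟨t, ht, hit⟩
        have heq : hex.choose = t :=
          hid _ hex.choose_spec.choose _ ht (hex.choose_spec.choose_spec.trans hit.symm)
        have hval : h m = mt hex.choose hex.choose_spec.choose := dif_pos hex
        rw [hval]
        have := hmt hex.choose hex.choose_spec.choose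
        have hta' : hex.choose a = some c := by rw [heq]; exact hta
        exact this a c hta'
      | succ k ih =>
        intro c m hm
        rcases hfair k with ⟨fd, hfd, x, hwx, hsx, a, hda, hne, hns, heq, hrest⟩ | ⟨heq, _⟩
        · by_cases hc : c = a
          · subst hc
            rw [heq] at hm
            rcases hm with hm | hm
            · exact ih c m hm
            · obtain ⟨p, hp1, hp2⟩ := hne
              have hpx : h p ∈ tmap μ x := fun b c' hbc' => ih c' p (hp1 b c' hbc')
              have hsub : tmap μ x ⊆ μ c :=
                hμ.2 fd hfd x hwx hsx c hda ⟨h p, hpx, ih c p hp2⟩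
              exact hsub (fun b c' hbc' => ih c' m (hm b c' hbc'))
          · rw [hrest c hc] at hm
            exact ih c m hm
        · rw [heq] at hm; exact ih c m hm
    exact ⟨h n, key N α n hnα, key N β n hnβ⟩

end IncPaper
end

section
/- The closure algorithm is sound: if a constant a is placed in the computed closure cl(t) of tuple t (starting from the constants of t and repeatedly adding a whenever some X → A ∈ FD has a tuple x over X with all constants of x already in cl(t) and Δ_t ⊢ xa), then for every T-mapping μ satisfying Δ, μ(t) ⊆ μ(a). -/
open Set

namespace IncPaper

variable {Attr Const : Type}

/-- soundness of the closure algorithm: every constant `a` placed in the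
computed closure `cl(t)` satisfies `μ(t) ⊆ μ(a)` for every T-mapping `μ ⊨ Δ`. -/
theorem closure_algorithm_sound (dom : Const → Attr)
    (D : Set (Tup Attr Const)) (hDwf : ∀ u ∈ D, WF dom u)
    (FD : Set (FDep Attr)) (hFD : GoodFD FD)
    (t : Tup Attr Const) (hwt : WF dom t) :
    ∀ a : Const, InCl dom D FD t a →
      ∀ μ : TMap Const, SatDB dom μ D FD → tmap μ t ⊆ μ a := by
  intro a hcl
  induction hcl with
  | base a b hb =>
      intro μ _ n hn
      exact hn b a hb
  | step fd x a hfd hwx hsx hda hsub hder ih =>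
      intro μ hμ n hn
      -- n belongs to tmap μ x
      have hnx : n ∈ tmap μ x := by
        intro b c hbc
        exact ih c ⟨b, hbc⟩ μ hμ hn
      -- μ satisfies Δ_t = (insert t D, FD)
      have hμt : SatDB dom μ (insert t D) FD := by
        refine ⟨?_, hμ.2⟩
        intro u hu
        rcases hu with rfl | hu
        · exact ⟨n, hn⟩
        · exact hμ.1 u hu
      obtain ⟨m, hm⟩ := hder μ hμt
      -- x is undefined at dom a since dom a = fd.A ∉ fd.X = sch x
      have hxnone : x (dom a) = none := by
        by_contra h
        have : dom a ∈ sch x := h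
        rw [hsx, hda] at this
        exact (hFD fd hfd).2 this
      -- m ∈ tmap μ x ∩ μ a
      have hma : m ∈ μ a := by
        have := hm (dom a) a (by simp [extend])
        exact this
      have hmx : m ∈ tmap μ x := by
        intro b c hbc
        have hbne : b ≠ dom a := by
          intro h; rw [h, hxnone] at hbc; exact nomatch hbc
        exact hm b c (by simp [extend, hbne, hbc])
      have hsat := hμ.2 fd hfd x hwx hsx a hda ⟨m, hmx, hma⟩
      exact hsat hnx

end IncPaper
end

section
/- The closure algorithm is complete: if a constant a is not in the computed closure cl(t), then there exists a T-mapping μ satisfying Δ with μ(t) ⊄ μ(a). Hence the algorithm computes exactly the closure t⁺ = {a : ∀μ ⊨ Δ, μ(t) ⊆ μ(a)}. -/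
open Set

namespace IncPaper

variable {Attr Const : Type}

/-- Soundness of the closure algorithm. -/
theorem aux_incl_sound (dom : Const → Attr) (D : Set (Tup Attr Const))
    (FD : Set (FDep Attr)) (hFD : GoodFD FD) (t : Tup Attr Const) {a : Const}
    (h : InCl dom D FD t a) : a ∈ closure dom D FD t := by
  induction h with
  | base a b hb =>
    intro μ hμ n hn
    exact hn b a hb
  | step fd x a hfd hwfx hschx hdoma hc hder ih =>
    intro μ hμ n hn
    have hμ' : SatDB dom μ (insert t D) FD := by
      refine ⟨?_, hμ.2⟩
      intro u hu
      rcases hu with rfl | hu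
      · exact ⟨n, hn⟩
      · exact hμ.1 u hu
    obtain ⟨m, hm⟩ := hder μ hμ'
    have hxA : x fd.A = none := by
      by_contra h'
      have hmem : fd.A ∈ sch x := h'
      exact (hFD fd hfd).2 (hschx ▸ hmem)
    have hma : m ∈ μ a := hm (dom a) a (by simp [extend])
    have hmx : m ∈ tmap μ x := by
      intro b c hbc
      have hb : b ≠ dom a := by
        rintro rfl
        rw [hdoma, hxA] at hbc
        cases hbc
      exact hm b c (by simp [extend, hb, hbc])
    have hsub := hμ.2 fd hfd x hwfx hschx a hdoma ⟨m, hmx, hma⟩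
    apply hsub
    intro b c hbc
    exact ih c ⟨b, hbc⟩ μ hμ hn

/-- Completeness of the closure algorithm. -/
theorem aux_incl_complete [Fintype Attr] (dom : Const → Attr)
    (D : Set (Tup Attr Const)) (hDfin : D.Finite)
    (FD : Set (FDep Attr)) (hFD : GoodFD FD)
    (t : Tup Attr Const) (a : Const) (ha : ¬ InCl dom D FD t a) :
    ∃ μ : TMap Const, SatDB dom μ D FD ∧ ¬ tmap μ t ⊆ μ a := by
  classical
  set D' : Set (Tup Attr Const) := insert t D with hD'
  have hD'fin : D'.Finite := hDfin.insert t
  obtain ⟨f, hf⟩ := Set.countable_iff_exists_injective.mp hD'fin.countable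
  set ident : Tup Attr Const → ℕ := fun u => if h : u ∈ D' then f ⟨u, h⟩ else 0 with hidd
  have hinj : ∀ u ∈ D', ∀ v ∈ D', ident u = ident v → u = v := by
    intro u hu v hv huv
    simp only [hidd, dif_pos hu, dif_pos hv] at huv
    exact congrArg Subtype.val (hf huv)
  set W₀ : Set ℕ := ident '' D' with hW₀
  set C₁ : Set Const := {c | ∃ u ∈ D', ∃ b, u b = some c} with hC₁
  have hW₀fin : W₀.Finite := hD'fin.image ident
  have hC₁fin : C₁.Finite := by
    have he : C₁ = ⋃ u ∈ D', ⋃ b : Attr, {c | u b = some c} := by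
      ext c
      simp only [hC₁, Set.mem_setOf_eq, Set.mem_iUnion, exists_prop]
    rw [he]
    refine hD'fin.biUnion fun u _ => Set.finite_iUnion fun b => ?_
    refine Set.Subsingleton.finite ?_
    intro c hc c' hc'
    simp only [Set.mem_setOf_eq] at hc hc'
    exact Option.some_injective _ (hc.symm.trans hc')
  set μ₀ : TMap Const := fun c => {n | ∃ u ∈ D', ident u = n ∧ ∃ b, u b = some c} with hμ₀
  set Good : TMap Const → Prop := fun μ =>
    (∀ u ∈ D', ident u ∈ tmap μ u) ∧
    (∀ c, μ c ⊆ W₀) ∧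
    (∀ c, (μ c).Nonempty → c ∈ C₁) ∧
    (∀ n (ρ : TMap Const), SatDB dom ρ D' FD → ∃ m, ∀ c, n ∈ μ c → m ∈ ρ c) ∧
    (∀ c, ident t ∈ μ c → InCl dom D FD t c) with hGoodDef
  have htD' : t ∈ D' := Set.mem_insert _ _
  have hGood₀ : Good μ₀ := by
    refine ⟨?_, ?_, ?_, ?_, ?_⟩
    · intro u hu b c hbc
      exact ⟨u, hu, rfl, b, hbc⟩
    · rintro c n ⟨u, hu, rfl, -⟩
      exact ⟨u, hu, rfl⟩
    · rintro c ⟨n, u, hu, -, b, hbc⟩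
      exact ⟨u, hu, b, hbc⟩
    · intro n ρ hρ
      by_cases hn : ∃ u ∈ D', ident u = n
      · obtain ⟨u, hu, rfl⟩ := hn
        obtain ⟨m, hm⟩ := hρ.1 u hu
        refine ⟨m, ?_⟩
        rintro c ⟨u', hu', hid, b, hbc⟩
        rw [hinj u' hu' u hu hid] at hbc
        exact hm b c hbc
      · refine ⟨0, fun c hc => absurd ?_ hn⟩
        obtain ⟨u, hu, hid, -⟩ := hc
        exact ⟨u, hu, hid⟩
    · rintro c ⟨u, hu, hid, b, hbc⟩
      rw [hinj u hu t htD' hid] at hbc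
      exact InCl.base c b hbc
  set F : TMap Const → Set (Const × ℕ) := fun μ => {p | p.2 ∈ μ p.1} with hFdef
  have hFsub : ∀ μ, Good μ → F μ ⊆ C₁ ×ˢ W₀ := by
    rintro μ hG ⟨c, n⟩ hp
    exact ⟨hG.2.2.1 c ⟨n, hp⟩, hG.2.1 c hp⟩
  have hbigfin : (C₁ ×ˢ W₀).Finite := hC₁fin.prod hW₀fin
  set N : ℕ := (C₁ ×ˢ W₀).ncard with hN
  have key : ∀ μ, Good μ → ¬ (∀ fd ∈ FD, SatFDA dom μ fd) →
      ∃ μ', Good μ' ∧ (F μ).ncard < (F μ').ncard := by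
    intro μ hG hns
    simp only [SatFDA] at hns
    push_neg at hns
    obtain ⟨fd, hfd, x, hwfx, hschx, a', hdoma', hne, hnsub⟩ := hns
    obtain ⟨n₁, hn₁x, hn₁a⟩ := Set.not_subset.mp hnsub
    obtain ⟨b₀, hb₀⟩ := (hFD fd hfd).1
    have hb₀' : x b₀ ≠ none := by
      have : b₀ ∈ sch x := hschx ▸ hb₀
      exact this
    obtain ⟨c₀, hc₀⟩ := Option.ne_none_iff_exists'.mp hb₀'
    have htx_sub : tmap μ x ⊆ W₀ := fun n hn => hG.2.1 c₀ (hn b₀ c₀ hc₀)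
    set μ' : TMap Const := fun c => if c = a' then μ a' ∪ tmap μ x else μ c with hμ'def
    have hmono : ∀ c, μ c ⊆ μ' c := by
      intro c n hn
      by_cases hc : c = a' <;> simp [hμ'def, hc, hn]
      subst hc; exact Or.inl hn
    have hmemne : ∀ c, c ≠ a' → μ' c = μ c := by
      intro c hc; simp [hμ'def, hc]
    have hmema : μ' a' = μ a' ∪ tmap μ x := by simp [hμ'def]
    have hder' : ∀ ρ, SatDB dom ρ D' FD → ∃ m, m ∈ tmap ρ x ∧ m ∈ ρ a' := by
      intro ρ hρ
      obtain ⟨n₀, hn₀x, hn₀a⟩ := hne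
      obtain ⟨m₀, hm₀⟩ := hG.2.2.2.1 n₀ ρ hρ
      refine ⟨m₀, ?_, hm₀ a' hn₀a⟩
      intro b c hbc
      exact hm₀ c (hn₀x b c hbc)
    have hsubρ : ∀ ρ, SatDB dom ρ D' FD → tmap ρ x ⊆ ρ a' := by
      intro ρ hρ
      obtain ⟨m₀, h1, h2⟩ := hder' ρ hρ
      exact hρ.2 fd hfd x hwfx hschx a' hdoma' ⟨m₀, h1, h2⟩
    have hGood' : Good μ' := by
      refine ⟨?_, ?_, ?_, ?_, ?_⟩
      · intro u hu b c hbc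
        exact hmono c (hG.1 u hu b c hbc)
      · intro c
        by_cases hc : c = a'
        · rw [hc, hmema]
          exact Set.union_subset (hG.2.1 a') htx_sub
        · rw [hmemne c hc]; exact hG.2.1 c
      · intro c hcne
        by_cases hc : c = a'
        · obtain ⟨n₀, hn₀x, hn₀a⟩ := hne
          rw [hc]
          exact hG.2.2.1 a' ⟨n₀, hn₀a⟩
        · rw [hmemne c hc] at hcne; exact hG.2.2.1 c hcne
      · intro n ρ hρ
        obtain ⟨m, hm⟩ := hG.2.2.2.1 n ρ hρ
        refine ⟨m, fun c hc => ?_⟩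
        by_cases hca : c = a'
        · rw [hca, hmema] at hc
          rw [hca]
          rcases hc with hc | hc
          · exact hm a' hc
          · refine hsubρ ρ hρ ?_
            intro b c' hbc
            exact hm c' (hc b c' hbc)
        · rw [hmemne c hca] at hc
          exact hm c hc
      · intro c hc
        by_cases hca : c = a'
        · rw [hca, hmema] at hc
          rw [hca]
          rcases hc with hc | hc
          · exact hG.2.2.2.2 a' hc
          · refine InCl.step fd x a' hfd hwfx hschx hdoma' ?_ ?_
            · rintro c' ⟨b, hbc⟩
              exact hG.2.2.2.2 c' (hc b c' hbc)
            · intro ρ hρ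
              obtain ⟨m₀, hm₀x, hm₀a⟩ := hder' ρ hρ
              refine ⟨m₀, ?_⟩
              intro b c' hbc
              by_cases hb : b = dom a'
              · subst hb
                simp only [extend, if_pos rfl] at hbc
                rw [← Option.some_injective _ hbc]
                exact hm₀a
              · simp only [extend, if_neg hb] at hbc
                exact hm₀x b c' hbc
        · rw [hmemne c hca] at hc
          exact hG.2.2.2.2 c hc
    refine ⟨μ', hGood', ?_⟩
    have hss : F μ ⊂ F μ' := by
      constructor
      · rintro ⟨c, n⟩ hp
        exact hmono c hp
      · intro hcon
        have hmem : (a', n₁) ∈ F μ' := by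
          show n₁ ∈ μ' a'
          rw [hmema]; exact Or.inr hn₁x
        exact hn₁a (hcon hmem)
    exact Set.ncard_lt_ncard hss (hbigfin.subset (hFsub μ' hGood'))
  have main : ∀ k (μ : TMap Const), Good μ → N - (F μ).ncard ≤ k →
      ∃ μ', Good μ' ∧ ∀ fd ∈ FD, SatFDA dom μ' fd := by
    intro k
    induction k with
    | zero =>
      intro μ hG hk
      by_cases hs : ∀ fd ∈ FD, SatFDA dom μ fd
      · exact ⟨μ, hG, hs⟩
      · obtain ⟨μ', hG', hlt⟩ := key μ hG hs
        have h1 : (F μ').ncard ≤ N := Set.ncard_le_ncard (hFsub μ' hG') hbigfin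
        omega
    | succ k ih =>
      intro μ hG hk
      by_cases hs : ∀ fd ∈ FD, SatFDA dom μ fd
      · exact ⟨μ, hG, hs⟩
      · obtain ⟨μ', hG', hlt⟩ := key μ hG hs
        have h1 : (F μ').ncard ≤ N := Set.ncard_le_ncard (hFsub μ' hG') hbigfin
        exact ih μ' hG' (by omega)
  obtain ⟨μs, hGs, hsat⟩ := main (N - (F μ₀).ncard) μ₀ hGood₀ le_rfl
  refine ⟨μs, ⟨fun u hu => ⟨ident u, hGs.1 u (Set.mem_insert_of_mem _ hu)⟩, hsat⟩, ?_⟩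
  intro hsub
  exact ha (hGs.2.2.2.2 a (hsub (hGs.1 t htD')))

/-- completeness of the closure algorithm: a constant not in the computed
closure is omitted by some T-mapping satisfying `Δ`; hence the algorithm computes exactly
the closure `t⁺ = {a : ∀ μ ⊨ Δ, μ(t) ⊆ μ(a)}`. -/
theorem closure_algorithm_complete [Fintype Attr] (dom : Const → Attr)
    (D : Set (Tup Attr Const)) (hDfin : D.Finite) (hDwf : ∀ u ∈ D, WF dom u)
    (FD : Set (FDep Attr)) (hFD : GoodFD FD)
    (t : Tup Attr Const) (hwt : WF dom t) :
    ∀ a : Const,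
      (¬ InCl dom D FD t a →
        ∃ μ : TMap Const, SatDB dom μ D FD ∧ ¬ tmap μ t ⊆ μ a) ∧
      (InCl dom D FD t a ↔ a ∈ closure dom D FD t) := by
  intro a
  refine ⟨fun ha => aux_incl_complete dom D hDfin FD hFD t a ha, ?_, ?_⟩
  · exact fun h => aux_incl_sound dom D FD hFD t h
  · intro hcl
    by_contra hni
    obtain ⟨μ, hμ, hns⟩ := aux_incl_complete dom D hDfin FD hFD t a hni
    exact hns (hcl μ hμ)

end IncPaper
end

section
/- Δ = (D, FD) is consistent (i.e., there exists an interpretation μ — a T-mapping with μ(a) ∩ μ(a') = ∅ for all distinct a, a' in the same attribute domain — satisfying Δ) if and only if there is no tuple t with truth value inc, i.e., no tuple t such that both Δ ⊢ t and Δ |∼ t. -/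
open Set

namespace IncPaper

variable {Attr Const : Type}

/-- `Δ` is consistent (some interpretation satisfies it) iff no tuple has
truth value `inc`, i.e. there is no tuple `t` with both `Δ ⊢ t` and `Δ |∼ t`. -/
theorem consistent_iff_no_inconsistent_tuple [Fintype Attr] (dom : Const → Attr)
    (D : Set (Tup Attr Const)) (hDfin : D.Finite) (hDwf : ∀ u ∈ D, WF dom u)
    (FD : Set (FDep Attr)) (hFD : GoodFD FD) :
    (∃ μ : TMap Const, Interp dom μ ∧ SatDB dom μ D FD) ↔
      ¬ ∃ t : Tup Attr Const, WF dom t ∧ Derives dom D FD t ∧ PotFalse dom D FD t := by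
  constructor
  · rintro ⟨μ, hI, hS⟩ ⟨t, hwf, hder, a, a', hne, hda, hsub⟩
    obtain ⟨n, hn⟩ := hder μ hS
    have h := hsub μ hS hn
    rw [hI a a' hne hda] at h
    exact h
  · intro hno
    have hcnt : Countable ↥D := hDfin.countable
    obtain ⟨g, hg⟩ := exists_injective_nat ↥D
    set μs : TMap Const :=
      fun c => {n | ∃ u : ↥D, g u = n ∧ c ∈ closure dom D FD u.1} with hμs
    have hsat : SatDB dom μs D FD := by
      constructor
      · intro t ht
        refine ⟨g ⟨t, ht⟩, ?_⟩
        intro b c hbc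
        exact ⟨⟨t, ht⟩, rfl, fun μ hμ n hn => hn b c hbc⟩
      · rintro fd hfd x hxwf hxsch a hda ⟨n, hnx, hna⟩
        obtain ⟨u, hgu, hau⟩ := hna
        obtain ⟨hXne, _⟩ := hFD fd hfd
        obtain ⟨b0, hb0⟩ := hXne
        rw [← hxsch] at hb0
        obtain ⟨c0, hc0⟩ := Option.ne_none_iff_exists'.mp hb0
        intro m hmx
        obtain ⟨w, hgw, _⟩ := hmx b0 c0 hc0
        have hxw : ∀ b c, x b = some c → c ∈ closure dom D FD w.1 := by
          intro b c hbc
          obtain ⟨w', hgw', hcw'⟩ := hmx b c hbc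
          rwa [hg (hgw'.trans hgw.symm)] at hcw'
        have hxu : ∀ b c, x b = some c → c ∈ closure dom D FD u.1 := by
          intro b c hbc
          obtain ⟨u', hgu', hcu'⟩ := hnx b c hbc
          rwa [hg (hgu'.trans hgu.symm)] at hcu'
        refine ⟨w, hgw, ?_⟩
        intro μ hμ k hk
        have hwx : tmap μ w.1 ⊆ tmap μ x :=
          fun k hk b c hbc => hxw b c hbc μ hμ hk
        have hux : tmap μ u.1 ⊆ tmap μ x :=
          fun k hk b c hbc => hxu b c hbc μ hμ hk
        have hua : tmap μ u.1 ⊆ μ a := hau μ hμ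
        obtain ⟨k0, hk0⟩ := hμ.1 u.1 u.2
        have hnem : (tmap μ x ∩ μ a).Nonempty := ⟨k0, hux hk0, hua hk0⟩
        exact hμ.2 fd hfd x hxwf hxsch a hda hnem (hwx hk)
    refine ⟨μs, ?_, hsat⟩
    intro a a' hne hda
    by_contra hcon
    obtain ⟨n, hna, hna'⟩ := Set.nonempty_iff_ne_empty.mpr hcon
    obtain ⟨u, hgu, hau⟩ := hna
    obtain ⟨u', hgu', hau'⟩ := hna'
    have heq : u' = u := hg (hgu'.trans hgu.symm)
    subst heq
    exact hno ⟨u'.1, hDwf u'.1 u'.2, fun μ hμ => hμ.1 u'.1 u'.2,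
      a, a', hne, hda, fun μ hμ k hk => ⟨hau μ hμ hk, hau' μ hμ hk⟩⟩

end IncPaper
end

section
/- A tuple t is false in Δ (i.e., Δ ⊬ t and Δ |∼ t) if and only if Δ ⊬ t and t is inconsistent in Δ_t = (D ∪ {t}, FD) (i.e., Δ_t ⊢ t and Δ_t |∼ t). -/
open Set

namespace IncPaper

variable {Attr Const : Type}

/-- `t` is false in `Δ` (`Δ ⊬ t` and `Δ |∼ t`) iff `Δ ⊬ t` and `t` is
inconsistent in `Δ_t = (D ∪ {t}, FD)` (`Δ_t ⊢ t` and `Δ_t |∼ t`). -/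
theorem false_iff_inconsistent_in_extension (dom : Const → Attr)
    (D : Set (Tup Attr Const)) (hDwf : ∀ u ∈ D, WF dom u)
    (FD : Set (FDep Attr)) (t : Tup Attr Const) (hwt : WF dom t) :
    (¬ Derives dom D FD t ∧ PotFalse dom D FD t) ↔
      (¬ Derives dom D FD t ∧ Derives dom (insert t D) FD t ∧
        PotFalse dom (insert t D) FD t) := by
  have hmono : ∀ μ : TMap Const, SatDB dom μ (insert t D) FD → SatDB dom μ D FD := by
    intro μ ⟨h1, h2⟩
    exact ⟨fun u hu => h1 u (Set.mem_insert_of_mem _ hu), h2⟩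
  constructor
  · rintro ⟨hnd, a, a', hne, hdom, hsub⟩
    refine ⟨hnd, fun μ hμ => (hμ.1 t (Set.mem_insert _ _)), a, a', hne, hdom,
      fun μ hμ => hsub μ (hmono μ hμ)⟩
  · rintro ⟨hnd, _, a, a', hne, hdom, hsub⟩
    refine ⟨hnd, a, a', hne, hdom, fun μ hμ => ?_⟩
    by_cases hne2 : (tmap μ t).Nonempty
    · exact hsub μ ⟨fun u hu => hu.elim (fun e => e ▸ hne2) (fun h => hμ.1 u h), hμ.2⟩
    · rw [Set.not_nonempty_iff_eq_empty] at hne2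
      simp [hne2]

end IncPaper
end

section
/- Monotonicity of truth values under table merging: let Δᵢ = (Dᵢ, FDᵢ), i = 1,…,n, be databases over the same universe and Δ = (⋃Dᵢ, ⋃FDᵢ) their merge. Then for every tuple t, the knowledge-join ⊕ᵢ v_{Δᵢ}(t) of the truth values of t in the sources is ≤ (in the knowledge ordering unkn ◁ false ◁ inc, unkn ◁ true ◁ inc) the truth value v_Δ(t) of t in the merged database. -/
open Set

namespace IncPaper

variable {Attr Const : Type}

lemma satdb_mono {dom : Const → Attr} {μ : TMap Const} {D D' : Set (Tup Attr Const)}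
    {FD FD' : Set (FDep Attr)} (hD : D ⊆ D') (hFD : FD ⊆ FD')
    (h : SatDB dom μ D' FD') : SatDB dom μ D FD :=
  ⟨fun t ht => h.1 t (hD ht), fun fd hfd => h.2 fd (hFD hfd)⟩

lemma tval_mono {dom : Const → Attr} {D D' : Set (Tup Attr Const)}
    {FD FD' : Set (FDep Attr)} (hD : D ⊆ D') (hFD : FD ⊆ FD') (t : Tup Attr Const) :
    TV.kle (tval dom D FD t) (tval dom D' FD' t) := by
  have hd : Derives dom D FD t → Derives dom D' FD' t :=
    fun h μ hμ => h μ (satdb_mono hD hFD hμ)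
  have hp : PotFalse dom D FD t → PotFalse dom D' FD' t := by
    rintro ⟨a, a', h1, h2, h3⟩
    exact ⟨a, a', h1, h2, fun μ hμ => h3 μ (satdb_mono hD hFD hμ)⟩
  unfold tval
  by_cases h1 : Derives dom D FD t <;> by_cases h2 : PotFalse dom D FD t <;>
    simp only [h1, h2, if_true, if_false, if_pos, if_neg, not_false_iff] <;>
    first
      | (simp only [if_pos (hd h1), if_pos (hp h2)]; exact Or.inl rfl)
      | (simp only [if_pos (hd h1)]
         by_cases h3 : PotFalse dom D' FD' t <;> simp [h3, TV.kle])
      | (simp only [if_pos (hp h2)]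
         by_cases h3 : Derives dom D' FD' t <;> simp [h3, TV.kle])
      | (simp [TV.kle])

lemma kjoin_le {x y z : TV} (hx : TV.kle x z) (hy : TV.kle y z) :
    TV.kle (TV.kjoin x y) z := by
  cases x <;> cases y <;> cases z <;> simp_all [TV.kle, TV.kjoin]

lemma foldr_kjoin_le {z : TV} : ∀ l : List TV, (∀ x ∈ l, TV.kle x z) →
    TV.kle (l.foldr TV.kjoin TV.vunkn) z
  | [], _ => Or.inr (Or.inl rfl)
  | x :: l, h =>
    kjoin_le (h x List.mem_cons_self)
      (foldr_kjoin_le l fun y hy => h y (List.mem_cons_of_mem x hy))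

/-- monotonicity of truth values under merging: the knowledge-join of the
truth values of `t` in the sources is below (in the knowledge ordering) the truth value
of `t` in the merged database `Δ = (⋃ Dᵢ, ⋃ FDᵢ)`. -/
theorem merge_monotone (dom : Const → Attr) (n : ℕ)
    (Ds : Fin n → Set (Tup Attr Const)) (FDs : Fin n → Set (FDep Attr))
    (t : Tup Attr Const) :
    TV.kle ((List.ofFn fun i => tval dom (Ds i) (FDs i) t).foldr TV.kjoin TV.vunkn)
      (tval dom (⋃ i, Ds i) (⋃ i, FDs i) t) := by
  refine foldr_kjoin_le _ fun x hx => ?_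
  simp only [List.mem_ofFn] at hx
  obtain ⟨i, rfl⟩ := hx
  exact tval_mono (Set.subset_iUnion Ds i) (Set.subset_iUnion FDs i) t

end IncPaper
end
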